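/- Let H be a vector space with bilinear form ⟨·,·⟩ and S(x) : H⊗H → H⊗H⊗ℂ[[x]] a linear map, and let W be a vacuum (H,S)-module generated by a vacuum-like vector e. Define W[k] = span{a⁽¹⁾(−m₁)⋯a⁽ʳ⁾(−m_r)e : r ≥ 0, a⁽ⁱ⁾ ∈ H, mᵢ ≥ 1, m₁+⋯+m_r ≤ k} for k ≥ 0 and W[k] = 0 for k < 0. Then for all a ∈ H, m,k ∈ ℤ: a(m)W[k] ⊆ W[k−m], and a(m)W[k] ⊆ W[k−m−1] whenever m ≥ 0. -/

import Mathlib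

noncomputable section

open scoped TensorProduct

variable {H W : Type} [AddCommGroup H] [Module ℂ H] [AddCommGroup W] [Module ℂ W]

/-- Given an action `act m a` of the generators `a(m) = a ⊗ tᵐ` of the tensor algebra
`T(H ⊗ ℂ[t,t⁻¹])` on `W`, the bilinear map `b' ⊗ a' ↦ b'(p) ∘ a'(q)` on `H ⊗ H`. -/
def pairAct (act : ℤ → H →ₗ[ℂ] W →ₗ[ℂ] W) (p q : ℤ) :
    H ⊗[ℂ] H →ₗ[ℂ] (W →ₗ[ℂ] W) :=
  TensorProduct.lift
    (LinearMap.mk₂ ℂ (fun b' a' => (act p b') ∘ₗ (act q a'))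
      (fun b₁ b₂ a' => by simp [map_add, LinearMap.add_comp])
      (fun c b' a' => by simp [map_smul, LinearMap.smul_comp])
      (fun b' a₁ a₂ => by simp [map_add, LinearMap.comp_add])
      (fun c b' a' => by simp [map_smul, LinearMap.comp_smul]))

/-- The iterated product `a⁽¹⁾(m₁) ⋯ a⁽ʳ⁾(m_r) w`. -/
def actSeq (act : ℤ → H →ₗ[ℂ] W →ₗ[ℂ] W) :
    (r : ℕ) → (Fin r → H) → (Fin r → ℤ) → W → W
  | 0, _, _, w => w
  | r + 1, a, m, w => act (m 0) (a 0) (actSeq act r (Fin.tail a) (Fin.tail m) w)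

/-- The filtration `W[k] = span{a⁽¹⁾(-m₁) ⋯ a⁽ʳ⁾(-m_r)e : r ≥ 0, mᵢ ≥ 1, ∑ mᵢ ≤ k}`
of a vacuum `(H,S)`-module generated by the vacuum-like vector `e`
(so `W[k] = 0` for `k < 0`). -/
def Wfil (act : ℤ → H →ₗ[ℂ] W →ₗ[ℂ] W) (e : W) (k : ℤ) : Submodule ℂ W :=
  Submodule.span ℂ
    {w : W | ∃ (r : ℕ) (a : Fin r → H) (m : Fin r → ℤ),
      (∀ i, 1 ≤ m i) ∧ (∑ i, m i) ≤ k ∧ w = actSeq act r a (fun i => -(m i)) e}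

/- ---------------- Auxiliary material ---------------- -/

/-- A submodule is closed under `finsum`. -/
lemma finsum_mem_submodule {ι : Type} (f : ι → W) (S : Submodule ℂ W)
    (h : ∀ i, f i ∈ S) : ∑ᶠ i, f i ∈ S := by
  by_cases hf : (Function.support f).Finite
  · rw [finsum_eq_sum f hf]
    exact Submodule.sum_mem _ fun i _ => h i
  · rw [finsum_of_infinite_support hf]
    exact S.zero_mem

/-- Generators of bounded length. -/
def genSet (act : ℤ → H →ₗ[ℂ] W →ₗ[ℂ] W) (e : W) (k : ℤ) (r : ℕ) : Set W :=
  {w : W | ∃ (s : ℕ), s ≤ r ∧ ∃ (a : Fin s → H) (m : Fin s → ℤ),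
    (∀ i, 1 ≤ m i) ∧ (∑ i, m i) ≤ k ∧ w = actSeq act s a (fun i => -(m i)) e}

/-- The filtration refined by generator length. -/
def Wb (act : ℤ → H →ₗ[ℂ] W →ₗ[ℂ] W) (e : W) (k : ℤ) (r : ℕ) : Submodule ℂ W :=
  Submodule.span ℂ (genSet act e k r)

lemma Wb_mono {act : ℤ → H →ₗ[ℂ] W →ₗ[ℂ] W} {e : W} {k k' : ℤ} {r r' : ℕ}
    (hk : k ≤ k') (hr : r ≤ r') : Wb act e k r ≤ Wb act e k' r' := by
  apply Submodule.span_mono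
  rintro w ⟨s, hs, a, m, h1, h2, h3⟩
  exact ⟨s, hs.trans hr, a, m, h1, h2.trans hk, h3⟩

lemma Wb_le_Wfil {act : ℤ → H →ₗ[ℂ] W →ₗ[ℂ] W} {e : W} {k : ℤ} {r : ℕ} :
    Wb act e k r ≤ Wfil act e k := by
  apply Submodule.span_mono
  rintro w ⟨s, _, a, m, h1, h2, h3⟩
  exact ⟨s, a, m, h1, h2, h3⟩

lemma mem_Wb_of_gen {act : ℤ → H →ₗ[ℂ] W →ₗ[ℂ] W} {e : W} {k : ℤ} {s : ℕ}
    (a : Fin s → H) (m : Fin s → ℤ) (h1 : ∀ i, 1 ≤ m i) (h2 : (∑ i, m i) ≤ k) :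
    actSeq act s a (fun i => -(m i)) e ∈ Wb act e k s :=
  Submodule.subset_span ⟨s, le_refl s, a, m, h1, h2, rfl⟩

lemma actSeq_cons {act : ℤ → H →ₗ[ℂ] W →ₗ[ℂ] W} {e : W} {s : ℕ}
    (c : H) (mm : ℤ) (a : Fin s → H) (ms : Fin s → ℤ) :
    actSeq act (s + 1) (Fin.cons c a) (Fin.cons mm ms) e =
      act mm c (actSeq act s a ms e) := by
  simp [actSeq, Fin.tail_cons, Fin.cons_zero]

/-- The key lemma, by strong induction on the length bound `r`. -/
lemma keyM
    (Bf : H →ₗ[ℂ] H →ₗ[ℂ] ℂ)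
    (S : ℕ → (H ⊗[ℂ] H →ₗ[ℂ] H ⊗[ℂ] H))
    (act : ℤ → H →ₗ[ℂ] W →ₗ[ℂ] W)
    (hrel : ∀ (a b : H) (m n : ℤ) (w : W),
      act m a (act n b w) -
        (∑ᶠ rs : ℕ × ℕ,
          ((((-1 : ℤ) ^ rs.2 * (rs.1.choose rs.2 : ℤ)) : ℤ) : ℂ) •
            (pairAct act (n + rs.1 - rs.2) (m + rs.2)) (S rs.1 (b ⊗ₜ[ℂ] a)) w) =
      (if m + n + 1 = 0 then (Bf a b) • w else 0))
    (e : W)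
    (hvaclike : ∀ (a : H) (m : ℤ), 0 ≤ m → act m a e = 0) :
    ∀ (r : ℕ) (k : ℤ) (w : W), w ∈ Wb act e k r → ∀ (c : H) (m : ℤ),
      act m c w ∈ Wb act e (k - m) (r + 1) ∧
      (0 ≤ m → act m c w ∈ Wb act e (k - m - 1) r) := by
  intro r
  induction r using Nat.strong_induction_on with
  | _ r IH =>
  intro k w hw
  refine Submodule.span_induction ?_ ?_ ?_ ?_ hw
  · -- generators
    rintro w ⟨s, hs, a, ms, h1, h2, rfl⟩
    intro c m
    by_cases hm : 0 ≤ m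
    · -- m ≥ 0 : use the relation
      have hsecond : act m c (actSeq act s a (fun i => -(ms i)) e) ∈
          Wb act e (k - m - 1) r := by
        match s, a, ms, h1, h2, hs with
        | 0, a, ms, h1, h2, hs =>
          have : actSeq act 0 a (fun i => -(ms i)) e = e := rfl
          rw [this, hvaclike c m hm]
          exact Submodule.zero_mem _
        | s' + 1, a, ms, h1, h2, hs =>
          -- decompose
          have htail : Fin.tail (fun i : Fin (s' + 1) => -(ms i)) =
              fun i => -(Fin.tail ms i) := by
            funext i; simp [Fin.tail]
          set n : ℤ := ms 0 with hn
          set w' : W := actSeq act s' (Fin.tail a)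
            (fun i => -(Fin.tail ms i)) e with hw'
          have hdec : actSeq act (s' + 1) a (fun i => -(ms i)) e =
              act (-n) (a 0) w' := by
            simp [actSeq, htail, hw', hn]
          have hsum : (∑ i, ms i) = n + ∑ i, Fin.tail ms i := by
            rw [Fin.sum_univ_succ]; rfl
          have hK : (∑ i, Fin.tail ms i) ≤ k - n := by omega
          have hw'mem : w' ∈ Wb act e (k - n) s' :=
            mem_Wb_of_gen _ _ (fun i => h1 i.succ) hK
          have hs' : s' < r := by omega
          rw [hdec]
          have hr := hrel c (a 0) m (-n) w'
          rw [sub_eq_iff_eq_add] at hr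
          rw [hr]
          apply Submodule.add_mem
          · -- delta term
            split_ifs with hif
            · apply Submodule.smul_mem
              have : k - n = k - m - 1 := by omega
              exact Wb_mono (by omega) (by omega) hw'mem
            · exact Submodule.zero_mem _
          · -- the finsum
            apply finsum_mem_submodule
            intro rs
            apply Submodule.smul_mem
            have hgoal : ∀ t : H ⊗[ℂ] H,
                (pairAct act (-n + rs.1 - rs.2) (m + rs.2)) t w' ∈
                  Wb act e (k - m - 1) r := by
              intro t
              induction t using TensorProduct.induction_on with
              | zero => simp
              | tmul b' a' =>
                have happ : (pairAct act (-n + rs.1 - rs.2) (m + rs.2)) (b' ⊗ₜ[ℂ] a') w' =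
                    act (-n + rs.1 - rs.2) b' (act (m + rs.2) a' w') := rfl
                rw [happ]
                have hq0 : (0:ℤ) ≤ m + rs.2 := by
                  have := Int.natCast_nonneg rs.2; omega
                have step1 : act (m + rs.2) a' w' ∈
                    Wb act e (k - n - (m + rs.2) - 1) s' :=
                  (IH s' hs' (k - n) w' hw'mem a' (m + rs.2)).2 hq0
                have step2 : act (-n + rs.1 - rs.2) b' (act (m + rs.2) a' w') ∈
                    Wb act e (k - n - (m + rs.2) - 1 - (-n + rs.1 - rs.2)) (s' + 1) :=
                  (IH s' hs' _ _ step1 b' (-n + rs.1 - rs.2)).1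
                have hkk : k - n - (m + rs.2) - 1 - (-n + rs.1 - rs.2) ≤ k - m - 1 := by
                  have := Int.natCast_nonneg rs.1; omega
                exact Wb_mono hkk (by omega) step2
              | add x y hx hy =>
                rw [map_add, LinearMap.add_apply]
                exact Submodule.add_mem _ hx hy
            exact hgoal _
      refine ⟨Wb_mono (by omega) (by omega) hsecond, fun _ => hsecond⟩
    · -- m < 0 : a new generator
      push_neg at hm
      have hms : (fun i : Fin (s + 1) => -((Fin.cons (-m) ms : Fin (s + 1) → ℤ) i)) =
          Fin.cons m (fun i => -(ms i)) := by
        funext i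
        refine Fin.cases ?_ ?_ i
        · simp
        · intro j; simp
      have hcons :
          actSeq act (s + 1) (Fin.cons c a)
              (fun i => -((Fin.cons (-m) ms : Fin (s + 1) → ℤ) i)) e =
            act m c (actSeq act s a (fun i => -(ms i)) e) := by
        rw [hms, actSeq_cons]
      rw [← hcons]
      constructor
      · have hsum0 : (0:ℤ) ≤ k := by
          calc (0:ℤ) ≤ ∑ i, ms i := Finset.sum_nonneg fun i _ => by
                have := h1 i; omega
            _ ≤ k := h2
        have hgmem : actSeq act (s + 1) (Fin.cons c a)
            (fun i => -((Fin.cons (-m) ms : Fin (s + 1) → ℤ) i)) e ∈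
              Wb act e (k - m) (s + 1) := by
          apply mem_Wb_of_gen (Fin.cons c a) (Fin.cons (-m) ms)
          · intro i
            refine Fin.cases ?_ ?_ i
            · simpa using by omega
            · intro j; simpa using h1 j
          · rw [Fin.sum_cons]; omega
        exact Wb_mono (le_refl _) (by omega) hgmem
      · intro h0; exact absurd h0 (not_le.mpr hm)
  · -- zero
    intro c m
    simp only [map_zero]
    exact ⟨Submodule.zero_mem _, fun _ => Submodule.zero_mem _⟩
  · -- add
    intro x y hx hy ihx ihy c m
    rw [map_add]
    exact ⟨Submodule.add_mem _ (ihx c m).1 (ihy c m).1,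
      fun h0 => Submodule.add_mem _ ((ihx c m).2 h0) ((ihy c m).2 h0)⟩
  · -- smul
    intro t x hx ihx c m
    rw [map_smul]
    exact ⟨Submodule.smul_mem _ _ (ihx c m).1,
      fun h0 => Submodule.smul_mem _ _ ((ihx c m).2 h0)⟩

/-- Let `H` carry a bilinear form `⟨·,·⟩` and a linear map
`S(x) = ∑_{r≥0} S_r x^r : H ⊗ H → H ⊗ H ⊗ ℂ[[x]]`, and let `W` be a vacuum
`(H,S)`-module generated by a vacuum-like vector `e`: each `a(x) = ∑ a(m)x^{-m-1}` is
truncated, the defining relation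
`a(x₁)b(x₂)w - ∑ᵢ ι_{x₂,x₁}(fᵢ(x₂-x₁)) b⁽ⁱ⁾(x₂)a⁽ⁱ⁾(x₁)w = x₂⁻¹δ(x₁/x₂)⟨a,b⟩w`
(with `S(x)(b ⊗ a) = ∑ᵢ b⁽ⁱ⁾ ⊗ a⁽ⁱ⁾ ⊗ fᵢ(x)`) holds, written coefficientwise, and
`a(m)e = 0` for `m ≥ 0`, with `W` generated from `e` by the operators `a(m)`.
Then the `W[k]` form an increasing exhaustive filtration of `W` with
`a(m) W[k] ⊆ W[k-m]` for all `m ∈ ℤ`, and `a(m) W[k] ⊆ W[k-m-1]` for `m ≥ 0`. -/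
theorem stmt13
    (Bf : H →ₗ[ℂ] H →ₗ[ℂ] ℂ)
    (S : ℕ → (H ⊗[ℂ] H →ₗ[ℂ] H ⊗[ℂ] H))
    (act : ℤ → H →ₗ[ℂ] W →ₗ[ℂ] W)
    (htrunc : ∀ (a : H) (w : W), ∃ N : ℤ, ∀ m : ℤ, N ≤ m → act m a w = 0)
    (hrel : ∀ (a b : H) (m n : ℤ) (w : W),
      act m a (act n b w) -
        (∑ᶠ rs : ℕ × ℕ,
          ((((-1 : ℤ) ^ rs.2 * (rs.1.choose rs.2 : ℤ)) : ℤ) : ℂ) •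
            (pairAct act (n + rs.1 - rs.2) (m + rs.2)) (S rs.1 (b ⊗ₜ[ℂ] a)) w) =
      (if m + n + 1 = 0 then (Bf a b) • w else 0))
    (e : W)
    (hvaclike : ∀ (a : H) (m : ℤ), 0 ≤ m → act m a e = 0)
    (hgen : (⊤ : Submodule ℂ W) = Submodule.span ℂ
      {w : W | ∃ (r : ℕ) (a : Fin r → H) (m : Fin r → ℤ), w = actSeq act r a m e}) :
    Monotone (Wfil act e) ∧ (⨆ k, Wfil act e k) = ⊤ ∧
    ∀ (a : H) (m k : ℤ) (w : W), w ∈ Wfil act e k →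
      act m a w ∈ Wfil act e (k - m) ∧
      (0 ≤ m → act m a w ∈ Wfil act e (k - m - 1)) := by
  have hmono : Monotone (Wfil act e) := by
    intro k k' hk
    apply Submodule.span_mono
    rintro w ⟨r, a, m, h1, h2, h3⟩
    exact ⟨r, a, m, h1, h2.trans hk, h3⟩
  have hmain : ∀ (a : H) (m k : ℤ) (w : W), w ∈ Wfil act e k →
      act m a w ∈ Wfil act e (k - m) ∧
      (0 ≤ m → act m a w ∈ Wfil act e (k - m - 1)) := by
    intro c m k w hw
    refine Submodule.span_induction ?_ ?_ ?_ ?_ hw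
    · rintro w ⟨s, a, ms, h1, h2, rfl⟩
      have hWb : actSeq act s a (fun i => -(ms i)) e ∈ Wb act e k s :=
        Submodule.subset_span ⟨s, le_refl s, a, ms, h1, h2, rfl⟩
      have := keyM Bf S act hrel e hvaclike s k _ hWb c m
      exact ⟨Wb_le_Wfil this.1, fun h0 => Wb_le_Wfil (this.2 h0)⟩
    · simp only [map_zero]
      exact ⟨Submodule.zero_mem _, fun _ => Submodule.zero_mem _⟩
    · intro x y hx hy ihx ihy
      rw [map_add]
      exact ⟨Submodule.add_mem _ ihx.1 ihy.1,
        fun h0 => Submodule.add_mem _ (ihx.2 h0) (ihy.2 h0)⟩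
    · intro t x hx ihx
      rw [map_smul]
      exact ⟨Submodule.smul_mem _ _ ihx.1,
        fun h0 => Submodule.smul_mem _ _ (ihx.2 h0)⟩
  refine ⟨hmono, ?_, hmain⟩
  have hemem : e ∈ Wfil act e 0 :=
    Submodule.subset_span ⟨0, Fin.elim0, Fin.elim0,
      fun i => i.elim0, by simp, rfl⟩
  have hdir : Directed (· ≤ ·) (Wfil act e) := hmono.directed_le
  have hsup : ∀ (r : ℕ) (a : Fin r → H) (m : Fin r → ℤ),
      actSeq act r a m e ∈ ⨆ k, Wfil act e k := by
    intro r
    induction r with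
    | zero =>
      intro a m
      exact Submodule.mem_iSup_of_mem 0 hemem
    | succ r ih =>
      intro a m
      have htl := ih (Fin.tail a) (Fin.tail m)
      obtain ⟨k, hk⟩ := (Submodule.mem_iSup_of_directed _ hdir).mp htl
      have := (hmain (a 0) (m 0) k _ hk).1
      show act (m 0) (a 0) (actSeq act r (Fin.tail a) (Fin.tail m) e) ∈ _
      exact Submodule.mem_iSup_of_mem (k - m 0) this
  apply le_antisymm le_top
  rw [hgen]
  rw [Submodule.span_le]
  rintro w ⟨r, a, m, rfl⟩
  exact hsup r a m
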